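/- In the no-subsidy regulation problem with continuous, monotone policies, if the no-subsidy constraint binds on an interval, then on that interval incentive compatibility forces at each point either q′(c) = 0 or the laissez-faire condition P(q(c)) + q(c)·P′(q(c)) = c. -/
import Mathlib


open Set

/-- In the no-subsidy regulation problem with continuous,
monotone policies, if the no-subsidy constraint binds on an interval `[a, b]`
(i.e. `Π c = q c * P (q c) - c * q c - k` there), then incentive compatibility
(`Π' c = - q c`) forces, at each interior point of the interval, either
`q' c = 0` or the laissez-faire condition `P (q c) + q c * P' (q c) = c`. -/
theorem stmt_9 (k a b : ℝ) (P P' q q' Pi : ℝ → ℝ)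
    (hab : a < b)
    (hbind : ∀ c ∈ Icc a b, Pi c = q c * P (q c) - c * q c - k)
    (hPid : ∀ c ∈ Ioo a b, HasDerivAt Pi (-(q c)) c)
    (hqd : ∀ c ∈ Ioo a b, HasDerivAt q (q' c) c)
    (hPd : ∀ c ∈ Ioo a b, HasDerivAt P (P' (q c)) (q c)) :
    ∀ c ∈ Ioo a b, q' c = 0 ∨ P (q c) + q c * P' (q c) = c := by
  intro c hc
  -- derivative of the RHS
  have hPq : HasDerivAt (fun x => P (q x)) (P' (q c) * q' c) c :=
    (hPd c hc).comp c (hqd c hc)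
  have hf : HasDerivAt (fun x => q x * P (q x) - x * q x - k)
      (q' c * P (q c) + q c * (P' (q c) * q' c) - (1 * q c + c * q' c)) c := by
    exact (((hqd c hc).mul hPq).sub ((hasDerivAt_id c).mul (hqd c hc))).sub_const k
  -- Pi agrees with this function on a neighborhood of c
  have heq : Pi =ᶠ[nhds c] fun x => q x * P (q x) - x * q x - k := by
    filter_upwards [Ioo_mem_nhds hc.1 hc.2] with x hx
    exact hbind x (Ioo_subset_Icc_self hx)
  have hPi2 : HasDerivAt Pi
      (q' c * P (q c) + q c * (P' (q c) * q' c) - (1 * q c + c * q' c)) c :=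
    hf.congr_of_eventuallyEq heq
  have hkey := hPi2.unique (hPid c hc)
  have h2 : q' c * (P (q c) + q c * P' (q c) - c) = 0 := by nlinarith [hkey]
  rcases mul_eq_zero.mp h2 with h | h
  · exact Or.inl h
  · right; linarith
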